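/- arXiv:1610.03836 — 3 statements merged into one kernel-verified Lean document; each statement's English description precedes it below -/
import Mathlib

section
/- Let 𝒜 be an abelian category. Suppose given three short exact sequences 0→M→C→C₀→0, 0→M→B→B₀→0, 0→M→A→A₀→0 with the same first object M, together with morphisms c : C→A, c₀ : C₀→A₀, b : B→A, b₀ : B₀→A₀, and f₀ : C₀→B₀ such that (id_M, c, c₀) is a morphism of short exact sequences from the first to the third, (id_M, b, b₀) is a morphism of short exact sequences from the second to the third, and b₀ ∘ f₀ = c₀. Then there exists a morphism f : C→B such that (id_M, f, f₀) is a morphism of short exact sequences from the first to the second and moreover b ∘ f = c (so that the whole diagram commutes). -/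
open CategoryTheory

/-- Given three short exact sequences `0 → M → C → C₀ → 0`,
`0 → M → B → B₀ → 0`, `0 → M → A → A₀ → 0` in an abelian category with the same
first object `M`, morphisms of short exact sequences `(𝟙 M, c, c₀)` from the first
to the third and `(𝟙 M, b, b₀)` from the second to the third, and `f₀ : C₀ ⟶ B₀`
with `b₀ ∘ f₀ = c₀`, there exists `f : C ⟶ B` such that `(𝟙 M, f, f₀)` is a morphism
of short exact sequences from the first to the second and `b ∘ f = c`. -/
theorem stmt0 {𝒜 : Type*} [Category 𝒜] [Abelian 𝒜]
    (M A A₀ B B₀ C C₀ : 𝒜)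
    (iA : M ⟶ A) (pA : A ⟶ A₀) (iB : M ⟶ B) (pB : B ⟶ B₀) (iC : M ⟶ C) (pC : C ⟶ C₀)
    (wA : iA ≫ pA = 0) (wB : iB ≫ pB = 0) (wC : iC ≫ pC = 0)
    (hA : (ShortComplex.mk iA pA wA).ShortExact)
    (hB : (ShortComplex.mk iB pB wB).ShortExact)
    (hC : (ShortComplex.mk iC pC wC).ShortExact)
    (c : C ⟶ A) (c₀ : C₀ ⟶ A₀) (b : B ⟶ A) (b₀ : B₀ ⟶ A₀) (f₀ : C₀ ⟶ B₀)
    (hc1 : iC ≫ c = 𝟙 M ≫ iA) (hc2 : c ≫ pA = pC ≫ c₀)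
    (hb1 : iB ≫ b = 𝟙 M ≫ iA) (hb2 : b ≫ pA = pB ≫ b₀)
    (hf : f₀ ≫ b₀ = c₀) :
    ∃ f : C ⟶ B, iC ≫ f = 𝟙 M ≫ iB ∧ f ≫ pB = pC ≫ f₀ ∧ f ≫ b = c := by
  have := hA.mono_f
  have := hB.mono_f
  have := hA.epi_g
  classical
  -- the pullback of pA and b₀
  set P := Limits.pullback pA b₀ with hP
  set fst : P ⟶ A := Limits.pullback.fst pA b₀ with hfst
  set snd : P ⟶ B₀ := Limits.pullback.snd pA b₀ with hsnd
  have hcond : fst ≫ pA = snd ≫ b₀ := Limits.pullback.condition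
  -- the induced map M → P
  have wiP : iA ≫ pA = (0 : M ⟶ B₀) ≫ b₀ := by simp [wA]
  set iP : M ⟶ P := Limits.pullback.lift iA 0 wiP with hiP
  have hiPfst : iP ≫ fst = iA := Limits.pullback.lift_fst _ _ _
  have hiPsnd : iP ≫ snd = 0 := Limits.pullback.lift_snd _ _ _
  have wP : iP ≫ snd = 0 := hiPsnd
  -- mono iP
  have : Mono iP := by
    refine mono_of_mono_fac hiPfst
  -- snd is epi (pullback of the epi pA)
  have hepi : Epi snd := by
    rw [hsnd]
    infer_instance
  -- iP is the kernel of snd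
  have hker : Limits.IsLimit (Limits.KernelFork.ofι iP wP) := by
    refine Limits.KernelFork.IsLimit.ofι iP wP (fun {T} t ht => ?_) ?_ ?_
    · -- lift
      have h1 : (t ≫ fst) ≫ pA = 0 := by
        rw [Category.assoc, hcond, ← Category.assoc, ht, Limits.zero_comp]
      exact (Limits.KernelFork.IsLimit.lift' hA.fIsKernel (t ≫ fst) h1).1
    · intro T t ht
      have h1 : (t ≫ fst) ≫ pA = 0 := by
        rw [Category.assoc, hcond, ← Category.assoc, ht, Limits.zero_comp]
      have h2 := (Limits.KernelFork.IsLimit.lift' hA.fIsKernel (t ≫ fst) h1).2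
      apply Limits.pullback.hom_ext
      · simpa [Category.assoc, ← hfst, hiPfst] using h2
      · simp [Category.assoc, ← hsnd, hiPsnd, ht]
    · intro T t ht m hm
      have h1 : (t ≫ fst) ≫ pA = 0 := by
        rw [Category.assoc, hcond, ← Category.assoc, ht, Limits.zero_comp]
      rw [← cancel_mono iP, hm]
      apply Limits.pullback.hom_ext
      · simpa [Category.assoc, ← hfst, hiPfst] using
          ((Limits.KernelFork.IsLimit.lift' hA.fIsKernel (t ≫ fst) h1).2).symm
      · simp [Category.assoc, ← hsnd, hiPsnd, ht]
  -- the short complex M → P → B₀ is short exact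
  set SP := ShortComplex.mk iP snd wP with hSP
  have hSPse : SP.ShortExact :=
    { exact := SP.exact_of_f_is_kernel hker
      mono_f := ‹Mono iP›
      epi_g := hepi }
  -- the comparison map B → P is an iso by the five lemma
  set β : B ⟶ P := Limits.pullback.lift b pB hb2 with hβ
  have hβfst : β ≫ fst = b := Limits.pullback.lift_fst _ _ _
  have hβsnd : β ≫ snd = pB := Limits.pullback.lift_snd _ _ _
  set SB := ShortComplex.mk iB pB wB with hSB
  have hiBβ : iB ≫ β = iP := by
    apply Limits.pullback.hom_ext
    · rw [Category.assoc, hβfst, hiPfst, hb1, Category.id_comp]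
    · rw [Category.assoc, hβsnd, hiPsnd, wB]
  have hc12 : SB.f ≫ β = 𝟙 M ≫ SP.f := by simpa using hiBβ
  have hc23 : β ≫ SP.g = SB.g ≫ 𝟙 B₀ := by rw [Category.comp_id]; exact hβsnd
  set φ : SB ⟶ SP := ShortComplex.Hom.mk (𝟙 M) β (𝟙 B₀) hc12.symm hc23 with hφ
  have : IsIso φ.τ₂ :=
    ShortComplex.isIso₂_of_shortExact_of_isIso₁₃' φ hB hSPse
      (by dsimp [φ]; infer_instance) (by dsimp [φ]; infer_instance)
  have hβiso : IsIso β := this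
  -- the map C → P
  have wγ : c ≫ pA = (pC ≫ f₀) ≫ b₀ := by
    rw [hc2, Category.assoc, hf]
  set γ : C ⟶ P := Limits.pullback.lift c (pC ≫ f₀) wγ with hγ
  have hγfst : γ ≫ fst = c := Limits.pullback.lift_fst _ _ _
  have hγsnd : γ ≫ snd = pC ≫ f₀ := Limits.pullback.lift_snd _ _ _
  refine ⟨γ ≫ inv β, ?_, ?_, ?_⟩
  · rw [Category.id_comp, ← Category.assoc]
    rw [IsIso.comp_inv_eq, hiBβ]
    apply Limits.pullback.hom_ext
    · rw [Category.assoc, hγfst, hiPfst, ← Category.id_comp iA, ← hc1]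
    · rw [Category.assoc, hγsnd, hiPsnd, ← Category.assoc, wC, Limits.zero_comp]
  · rw [Category.assoc, ← hβsnd, IsIso.inv_hom_id_assoc, hγsnd]
  · rw [Category.assoc, ← hβfst, IsIso.inv_hom_id_assoc, hγfst]
end

section
/- Let k be a field of characteristic zero, let R = k⟦t⟧ be the formal power series ring in one variable over k, let M be a finitely generated R-module, and let D : M → M be an additive map satisfying the Leibniz rule D(f • m) = f' • m + f • D(m) for all f ∈ R and m ∈ M, where f' denotes the formal derivative of f. Let M^∇ = {m ∈ M : D(m) = 0}, which is a k-linear subspace of M. Then the R-linear map M^∇ ⊗_k R → M determined by m ⊗ f ↦ f • m is an isomorphism of R-modules. -/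
open PowerSeries Finset

open scoped TensorProduct

noncomputable def solCoeff {k : Type*} [Field k] {ι : Type*} [Fintype ι] [DecidableEq ι]
    (Ac : ℕ → Matrix ι ι k) : ℕ → Matrix ι ι k
  | 0 => 1
  | (n+1) => (-((n : k)+1)⁻¹) •
      ∑ p ∈ Finset.range (n+1), Ac p * solCoeff Ac (n - p)
  decreasing_by omega

theorem solODE {k : Type*} [Field k] [CharZero k] {ι : Type*} [Fintype ι] [DecidableEq ι]
    (A : Matrix ι ι (PowerSeries k)) (i j : ι) :
    PowerSeries.derivative k
        (PowerSeries.mk fun n => solCoeff (fun n => Matrix.of fun i j => coeff n (A i j)) n i j)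
      = -((A * Matrix.of fun i j =>
          PowerSeries.mk fun n => solCoeff (fun n => Matrix.of fun i j => coeff n (A i j)) n i j) i j) := by
  set Ac : ℕ → Matrix ι ι k := fun n => Matrix.of fun i j => coeff n (A i j) with hAc
  ext n
  rw [PowerSeries.coeff_derivative, PowerSeries.coeff_mk, map_neg]
  have h1 : solCoeff Ac (n+1) = (-((n : k)+1)⁻¹) •
      ∑ p ∈ Finset.range (n+1), Ac p * solCoeff Ac (n - p) := by rw [solCoeff]
  rw [h1]
  have h2 : (PowerSeries.coeff n) ((A * Matrix.of fun i j =>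
      PowerSeries.mk fun n => solCoeff Ac n i j) i j)
      = (∑ p ∈ Finset.range (n+1), Ac p * solCoeff Ac (n - p)) i j := by
    rw [Matrix.mul_apply]
    rw [map_sum]
    have : ∀ l, (PowerSeries.coeff n) (A i l * PowerSeries.mk (fun n => solCoeff Ac n l j))
        = ∑ p ∈ Finset.range (n+1), Ac p i l * solCoeff Ac (n - p) l j := by
      intro l
      rw [PowerSeries.coeff_mul, Finset.Nat.sum_antidiagonal_eq_sum_range_succ_mk]
      refine Finset.sum_congr rfl fun p _ => ?_
      simp [hAc, PowerSeries.coeff_mk]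
    simp only [Matrix.of_apply]
    rw [Finset.sum_congr rfl fun l _ => this l, Finset.sum_comm]
    rw [Matrix.sum_apply]
    refine Finset.sum_congr rfl fun p _ => ?_
    rw [Matrix.mul_apply]
  rw [h2]
  have hne : ((n : k) + 1) ≠ 0 := by
    exact_mod_cast (Nat.cast_add_one_ne_zero n (R := k))
  rw [Matrix.smul_apply]
  field_simp
  rw [smul_eq_mul, ← mul_assoc, mul_neg, mul_one_div_cancel hne, neg_one_mul]

theorem deriv_zero_const {k : Type*} [Field k] [CharZero k] {f : PowerSeries k}
    (h : PowerSeries.derivative k f = 0) : f = PowerSeries.C (constantCoeff f) := by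
  ext n
  cases n with
  | zero => simp
  | succ n =>
    have := congrArg (coeff n) h
    rw [PowerSeries.coeff_derivative, map_zero] at this
    have hne : ((n : k) + 1) ≠ 0 := Nat.cast_add_one_ne_zero n
    rw [PowerSeries.coeff_C, if_neg (Nat.succ_ne_zero n)]
    push_cast at this
    exact (mul_eq_zero.mp this).resolve_right hne

theorem torsionfree (k : Type*) [Field k] [CharZero k]
    (M : Type*) [AddCommGroup M] [Module (PowerSeries k) M]
    [Module k M] [IsScalarTower k (PowerSeries k) M]
    [Module.Finite (PowerSeries k) M]
    (D : M → M)
    (hadd : ∀ m n : M, D (m + n) = D m + D n)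
    (hleib : ∀ (f : PowerSeries k) (m : M),
      D (f • m) = (PowerSeries.derivative k f) • m + f • D m) :
    NoZeroSMulDivisors (PowerSeries k) M := by
  set R := PowerSeries k
  have hD0 : D 0 = 0 := by
    have := hadd 0 0
    rw [add_zero] at this
    exact left_eq_add.mp this
  -- torsion elements are killed by a power of X
  have hpow : ∀ m : M, m ∈ Submodule.torsion R M → ∃ a : ℕ, (X : R) ^ a • m = 0 := by
    intro m hm
    obtain ⟨a, ha⟩ := (Submodule.mem_torsion_iff (R := R) m).mp hm
    have hne : (a : R) ≠ 0 := nonZeroDivisors.coe_ne_zero a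
    set f : R := (a : R)
    have h : (X : R) ^ (f.order.lift (PowerSeries.order_finite_iff_ne_zero.mpr hne)) * PowerSeries.divXPowOrder f = f := by
      rw [ENat.lift_eq_toNat_of_lt_top]; exact PowerSeries.X_pow_order_mul_divXPowOrder
    refine ⟨f.order.lift (PowerSeries.order_finite_iff_ne_zero.mpr hne), ?_⟩
    obtain ⟨u, hu⟩ := PowerSeries.isUnit_divided_by_X_pow_order hne
    have h0 : f • m = 0 := by rwa [Submonoid.smul_def] at ha
    have h2 : (↑u⁻¹ : R) • (f • m) = (X:R) ^ (f.order.lift (PowerSeries.order_finite_iff_ne_zero.mpr hne)) • m := by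
      conv_lhs => rw [← h]
      rw [← hu, ← mul_smul, ← mul_assoc, mul_comm (↑u⁻¹ : R), mul_assoc, Units.inv_mul, mul_one]
    rw [h0, smul_zero] at h2
    exact h2.symm
  have hconv : ∀ (m : M) (a : ℕ), (X : R) ^ a • m = 0 → m ∈ Submodule.torsion R M := by
    intro m a ha
    exact (Submodule.mem_torsion_iff (R := R) m).mpr
      ⟨⟨(X : R) ^ a, mem_nonZeroDivisors_of_ne_zero (pow_ne_zero _ PowerSeries.X_ne_zero)⟩, ha⟩
  -- D preserves torsion
  have hDtor : ∀ m : M, m ∈ Submodule.torsion R M → D m ∈ Submodule.torsion R M := by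
    intro m hm
    obtain ⟨a, ha⟩ := hpow m hm
    refine hconv (D m) (a + 1) ?_
    have h1 := hleib ((X : R) ^ a) m
    rw [ha, hD0] at h1
    -- 0 = d(X^a) • m + X^a • D m
    have h2 : (X : R) • ((PowerSeries.derivative k ((X:R) ^ a)) • m) + (X : R) ^ (a+1) • D m = 0 := by
      rw [show (X : R) ^ (a+1) • D m = (X:R) • ((X:R)^a • D m) by
        rw [← mul_smul, pow_succ, mul_comm], ← smul_add, ← h1, smul_zero]
    have h3 : (X : R) • ((PowerSeries.derivative k ((X:R) ^ a)) • m) = 0 := by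
      rw [← mul_smul]
      have hd : (X : R) * PowerSeries.derivative k ((X:R) ^ a) = (a : R) * (X:R) ^ a := by
        cases a with
        | zero => simp
        | succ b =>
          rw [Derivation.leibniz_pow, PowerSeries.derivative_X]
          push_cast
          simp only [Nat.add_sub_cancel, smul_eq_mul, mul_one, nsmul_eq_mul]
          push_cast
          ring
      rw [hd, mul_smul, ha, smul_zero]
    rw [h3, zero_add] at h2
    exact h2
  -- a power of X kills all of torsion
  classical
  obtain ⟨s, hs⟩ := (IsNoetherian.noetherian (Submodule.torsion R M))
  have hxs : ∀ x : M, x ∈ s → ∃ a : ℕ, (X : R) ^ a • x = 0 := fun x hx =>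
    hpow x (hs ▸ Submodule.subset_span hx)
  set g : M → ℕ := fun x => if h : ∃ a : ℕ, (X : R) ^ a • x = 0 then h.choose else 0 with hg
  set Nn := s.sup g with hNn
  have hkill : ∀ m ∈ Submodule.torsion R M, (X : R) ^ Nn • m = 0 := by
    have hle : Submodule.torsion R M ≤ LinearMap.ker (LinearMap.lsmul R M ((X:R)^Nn)) := by
      rw [← hs, Submodule.span_le]
      intro x hx
      obtain h := hxs x hx
      have hgx : (X : R) ^ (g x) • x = 0 := by
        rw [hg]; simp only [dif_pos h]; exact h.choose_spec
      have hle' : g x ≤ Nn := Finset.le_sup hx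
      simp only [SetLike.mem_coe, LinearMap.mem_ker, LinearMap.lsmul_apply]
      rw [← pow_sub_mul_pow (X : R) hle', mul_smul, hgx, smul_zero]
    intro m hm
    exact hle hm
  have main : ∀ n : ℕ, (∀ m ∈ Submodule.torsion R M, (X : R) ^ n • m = 0) →
      ∀ m ∈ Submodule.torsion R M, m = 0 := by
    intro n
    induction n with
    | zero => intro h m hm; simpa using h m hm
    | succ n ih =>
      intro h m hm
      refine ih (fun m hm => ?_) m hm
      have h1 := hleib ((X : R) ^ (n+1)) m
      rw [h m hm, hD0] at h1
      have hDm : (X:R) ^ (n+1) • D m = 0 := h (D m) (hDtor m hm)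
      rw [hDm, add_zero] at h1
      have hd : PowerSeries.derivative k ((X:R) ^ (n+1)) = ((n:R)+1) * (X:R)^n := by
        rw [Derivation.leibniz_pow, PowerSeries.derivative_X]
        simp only [Nat.add_sub_cancel, smul_eq_mul, mul_one, nsmul_eq_mul]
        push_cast
        ring
      rw [hd] at h1
      have halg : (algebraMap k R) ((n:k)+1) = ((n:R)+1) := by
        rw [map_add, map_one, map_natCast]
      have h2 : ((n:k)+1) • ((X:R)^n • m) = 0 := by
        rw [← algebraMap_smul R ((n:k)+1) ((X:R)^n • m), halg, ← mul_smul]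
        exact h1.symm
      have hne : ((n : k) + 1) ≠ 0 := Nat.cast_add_one_ne_zero n
      exact (smul_eq_zero.mp h2).resolve_left hne
  have htor0 := main Nn hkill
  refine ⟨fun {f m} hfm => ?_⟩
  by_cases hf : f = 0
  · exact Or.inl hf
  · refine Or.inr (htor0 m ?_)
    exact (Submodule.mem_torsion_iff (R := R) m).mpr
      ⟨⟨f, mem_nonZeroDivisors_of_ne_zero hf⟩, by rwa [Submonoid.smul_def]⟩

/-- Let `k` be a field of characteristic zero, `R = k⟦t⟧`, `M` a finitely
generated `R`-module and `D : M → M` an additive map satisfying the Leibniz rule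
`D (f • m) = f' • m + f • D m` (where `f'` is the formal derivative of `f`). Let
`N = M^∇ = ker D`, a `k`-subspace of `M`. Then the `R`-linear map
`M^∇ ⊗[k] R → M` determined by `m ⊗ f ↦ f • m` is an isomorphism of `R`-modules. -/
theorem stmt4 (k : Type*) [Field k] [CharZero k]
    (M : Type*) [AddCommGroup M] [Module (PowerSeries k) M]
    [Module k M] [IsScalarTower k (PowerSeries k) M]
    [Module.Finite (PowerSeries k) M]
    (D : M → M)
    (hadd : ∀ m n : M, D (m + n) = D m + D n)
    (hleib : ∀ (f : PowerSeries k) (m : M),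
      D (f • m) = (PowerSeries.derivative k f) • m + f • D m)
    (N : Submodule k M) (hN : ∀ m : M, m ∈ N ↔ D m = 0) :
    Function.Bijective (LinearMap.liftBaseChange (PowerSeries k) N.subtype) := by
  classical
  set R := PowerSeries k with hR
  haveI : NoZeroSMulDivisors R M := torsionfree k M D hadd hleib
  haveI : Module.Free R M := Module.free_of_finite_type_torsion_free'
  set ι := Module.Free.ChooseBasisIndex R M with hι
  set b : Module.Basis ι R M := Module.Free.chooseBasis R M with hb
  set A : Matrix ι ι R := Matrix.of fun i j => b.repr (D (b j)) i with hA
  set Ac : ℕ → Matrix ι ι k := fun n => Matrix.of fun i j => coeff n (A i j) with hAc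
  set Gm : Matrix ι ι R := Matrix.of fun i j => PowerSeries.mk fun n => solCoeff Ac n i j with hGm
  have hODE : ∀ i j, PowerSeries.derivative k (Gm i j) = -((A * Gm) i j) := fun i j =>
    solODE A i j
  have hDsum : ∀ (t : Finset ι) (v : ι → M), D (∑ i ∈ t, v i) = ∑ i ∈ t, D (v i) :=
    fun t v => map_sum (AddMonoidHom.mk' D hadd) v t
  have hDb : ∀ i, D (b i) = ∑ l, A l i • b l := fun i => (b.sum_repr (D (b i))).symm
  set h : ι → M := fun j => ∑ i, Gm i j • b i with hh
  have hDh : ∀ j, D (h j) = 0 := by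
    intro j
    rw [hh, hDsum]
    rw [Finset.sum_congr rfl fun i _ => hleib (Gm i j) (b i)]
    rw [Finset.sum_add_distrib]
    have h2 : ∑ i, Gm i j • D (b i) = ∑ l, ((A * Gm) l j) • b l := by
      rw [Finset.sum_congr rfl fun i (_ : i ∈ Finset.univ) => by rw [hDb i, Finset.smul_sum]]
      rw [Finset.sum_comm]
      refine Finset.sum_congr rfl fun l _ => ?_
      rw [Matrix.mul_apply, Finset.sum_smul]
      refine Finset.sum_congr rfl fun i _ => ?_
      rw [mul_comm, mul_smul]
    rw [h2, ← Finset.sum_add_distrib]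
    refine Finset.sum_eq_zero fun i _ => ?_
    rw [hODE i, neg_smul, neg_add_cancel]
  -- invertibility of Gm
  have hdet : IsUnit Gm.det := by
    rw [PowerSeries.isUnit_iff_constantCoeff]
    have hmap : (constantCoeff) Gm.det = (Gm.map (constantCoeff)).det :=
      RingHom.map_det (constantCoeff) Gm
    have hone : Gm.map (constantCoeff) = (1 : Matrix ι ι k) := by
      ext i j
      rw [Matrix.map_apply]
      have : Gm i j = PowerSeries.mk fun n => solCoeff Ac n i j := rfl
      rw [this, PowerSeries.constantCoeff_mk]
      have h0 : solCoeff Ac 0 = (1 : Matrix ι ι k) := by rw [solCoeff]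
      rw [h0]
    rw [hmap, hone, Matrix.det_one]
    exact isUnit_one
  -- basis of horizontal elements
  have hmat : LinearMap.toMatrix b b (Matrix.toLin b b Gm) = Gm := LinearMap.toMatrix_toLin b b Gm
  have hdet' : IsUnit (LinearMap.toMatrix b b (Matrix.toLin b b Gm)).det := by
    rw [hmat]; exact hdet
  set e : M ≃ₗ[R] M := LinearEquiv.ofIsUnitDet hdet' with he
  set b' : Module.Basis ι R M := b.map e with hb'
  have hb'j : ∀ j, b' j = h j := by
    intro j
    rw [hb', Module.Basis.map_apply]
    have hce : (e : M →ₗ[R] M) = Matrix.toLin b b Gm := LinearEquiv.coe_ofIsUnitDet hdet'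
    have : e (b j) = (Matrix.toLin b b Gm) (b j) := by rw [← hce]; rfl
    rw [this, Matrix.toLin_self]
  have hCsmul : ∀ (c : k) (x : M), (PowerSeries.C c) • x = c • x := by
    intro c x
    have : PowerSeries.C c = algebraMap k R c := by
      rw [PowerSeries.algebraMap_apply]
      simp
    rw [this, algebraMap_smul]
  have hhN : ∀ j, h j ∈ N := fun j => (hN _).mpr (hDh j)
  have hrep : ∀ m : M, D m = 0 → ∃ c : ι → k, m = ∑ j, c j • h j := by
    intro m hm
    have hm' : m = ∑ j, b'.repr m j • b' j := (b'.sum_repr m).symm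
    have hDm : (0 : M) = ∑ j, (PowerSeries.derivative k (b'.repr m j)) • b' j := by
      rw [← hm]
      conv_lhs => rw [hm']
      rw [hDsum]
      rw [Finset.sum_congr rfl fun j _ => hleib (b'.repr m j) (b' j)]
      refine Finset.sum_congr rfl fun j _ => ?_
      rw [hb'j j, hDh j, smul_zero, add_zero]
    have hder : ∀ j, PowerSeries.derivative k (b'.repr m j) = 0 :=
      Fintype.linearIndependent_iff.mp b'.linearIndependent _ hDm.symm
    refine ⟨fun j => constantCoeff (b'.repr m j), ?_⟩
    conv_lhs => rw [hm']
    refine Finset.sum_congr rfl fun j _ => ?_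
    rw [hb'j j, deriv_zero_const (hder j), hCsmul]
  set v : ι → N := fun j => ⟨h j, hhN j⟩ with hv
  have hvind : LinearIndependent k v := by
    rw [Fintype.linearIndependent_iff]
    intro c hc j
    have hcM : ∑ i, c i • h i = 0 := by
      have h1 := congrArg N.subtype hc
      rw [map_sum, map_zero] at h1
      simpa [hv] using h1
    have hRM : ∑ i, (PowerSeries.C (c i)) • b' i = 0 := by
      rw [Finset.sum_congr rfl fun i (_ : i ∈ Finset.univ) => by rw [hb'j i, hCsmul]]
      exact hcM
    have h0 := Fintype.linearIndependent_iff.mp b'.linearIndependent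
      (fun i => PowerSeries.C (c i)) hRM j
    exact (PowerSeries.C).injective (by rw [h0, map_zero])
  have hvspan : ⊤ ≤ Submodule.span k (Set.range v) := by
    intro x _
    obtain ⟨c, hc⟩ := hrep x.1 ((hN x.1).mp x.2)
    have hx : (x : N) = ∑ j, c j • v j := by
      apply Subtype.ext
      rw [hc]
      push_cast
      rfl
    rw [hx]
    exact Submodule.sum_mem _ fun j _ => Submodule.smul_mem _ _ (Submodule.subset_span ⟨j, rfl⟩)
  set bN : Module.Basis ι k N := Module.Basis.mk hvind hvspan with hbN
  set e2 : R ⊗[k] N ≃ₗ[R] M := (bN.baseChange R).equiv b' (Equiv.refl ι) with he2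
  have hfinal : LinearMap.liftBaseChange R N.subtype = (e2 : R ⊗[k] N →ₗ[R] M) := by
    apply Module.Basis.ext (bN.baseChange R)
    intro j
    have hrhs : (e2 : R ⊗[k] N →ₗ[R] M) ((bN.baseChange R) j) = b' j := by
      have := (bN.baseChange R).equiv_apply (b' := b') j (Equiv.refl ι)
      simpa [he2] using this
    rw [hrhs, Module.Basis.baseChange_apply, LinearMap.liftBaseChange_tmul, one_smul]
    have : N.subtype (bN j) = h j := by
      rw [hbN, Module.Basis.mk_apply]
      rfl
    rw [this, hb'j j]
  rw [hfinal]
  exact e2.bijective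
end

section
/- Let k be a field of characteristic zero, let R = k⟦t⟧ be the formal power series ring in one variable over k, and let M be a finitely generated R-module admitting an additive map D : M → M satisfying D(f • m) = f' • m + f • D(m) for all f ∈ R and m ∈ M, where f' denotes the formal derivative of f. Then M is a free R-module. -/
open PowerSeries

/-- Let `k` be a field of characteristic zero, `R = k⟦t⟧`, and `M` a
finitely generated `R`-module admitting an additive map `D : M → M` satisfying the
Leibniz rule `D (f • m) = f' • m + f • D m`, where `f'` is the formal derivative of
`f`. Then `M` is a free `R`-module. -/
theorem stmt5 (k : Type*) [Field k] [CharZero k]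
    (M : Type*) [AddCommGroup M] [Module (PowerSeries k) M]
    [Module.Finite (PowerSeries k) M]
    (D : M → M)
    (hadd : ∀ m n : M, D (m + n) = D m + D n)
    (hleib : ∀ (f : PowerSeries k) (m : M),
      D (f • m) = (PowerSeries.derivative k f) • m + f • D m) :
    Module.Free (PowerSeries k) M := by
  set R := PowerSeries k
  -- D 0 = 0
  have hD0 : D 0 = 0 := by
    have := hadd 0 0
    rw [add_zero] at this
    exact (left_eq_add.mp this)
  -- the kernel chain
  have Kmono : Monotone (fun n : ℕ => LinearMap.ker (LinearMap.lsmul R M ((X : R) ^ n))) := by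
    intro a b hab m hm
    simp only [LinearMap.mem_ker, LinearMap.lsmul_apply] at *
    obtain ⟨c, rfl⟩ := Nat.exists_eq_add_of_le hab
    rw [pow_add, mul_comm, mul_smul, hm, smul_zero]
  set K : ℕ →o Submodule R M := ⟨_, Kmono⟩ with hK
  have hKmem : ∀ (n : ℕ) (m : M), m ∈ K n ↔ (X : R) ^ n • m = 0 := fun n m => Iff.rfl
  obtain ⟨N, hN⟩ := monotone_stabilizes_iff_noetherian.mpr inferInstance K
  -- key : derivative of torsion stays torsion (one level up)
  have keyD : ∀ (n : ℕ) (m : M), m ∈ K n → D m ∈ K (n + 1) := by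
    intro n m hm
    rw [hKmem] at hm ⊢
    have h1 : D ((X : R) ^ n • m) = 0 := by rw [hm, hD0]
    rw [hleib, Derivation.leibniz_pow, derivative_X] at h1
    simp only [smul_eq_mul, nsmul_eq_mul, mul_one] at h1
    have h2 : (X : R) • ((((n : R) * (X : R) ^ (n - 1))) • m + (X : R) ^ n • D m) = 0 := by
      rw [h1, smul_zero]
    rw [smul_add, ← mul_smul, ← mul_smul] at h2
    have h3 : (X : R) * ((n : R) * (X : R) ^ (n - 1)) = (n : R) * (X : R) ^ n := by
      cases n with
      | zero => simp
      | succ i => simp only [Nat.add_sub_cancel, pow_succ]; ring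
    rw [h3, mul_smul, hm, smul_zero, zero_add, ← pow_succ'] at h2
    exact h2
  have keyDN : ∀ m : M, m ∈ K N → D m ∈ K N := by
    intro m hm
    have := keyD N m hm
    rwa [← hN (N + 1) (Nat.le_succ N)] at this
  -- descent: everything in K N is killed already at every lower level
  have desc : ∀ (i : ℕ), K N ≤ K (N - i) := by
    intro i
    induction i with
    | zero => simp
    | succ i ih =>
      rcases Nat.eq_zero_or_pos (N - i) with h0 | hpos
      · intro m hm
        have : N - (i + 1) = 0 := by omega
        rw [this, ← h0]; exact ih hm
      · obtain ⟨j, hj⟩ : ∃ j, N - i = j + 1 := ⟨N - i - 1, by omega⟩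
        have hj2 : N - (i + 1) = j := by omega
        intro m hm
        rw [hj2, hKmem]
        have hmj : (X : R) ^ (j + 1) • m = 0 := by
          have := ih hm; rw [hj] at this; exact this
        have hDm : (X : R) ^ (j + 1) • D m = 0 := by
          have h1 := keyDN m hm
          have h2 := ih h1
          rw [hj] at h2; exact h2
        have h1 : D ((X : R) ^ (j + 1) • m) = 0 := by rw [hmj, hD0]
        rw [hleib, Derivation.leibniz_pow, derivative_X, hDm, add_zero] at h1
        simp only [smul_eq_mul, nsmul_eq_mul, mul_one, Nat.add_sub_cancel, mul_smul] at h1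
        have hunit : IsUnit (((j + 1 : ℕ) : R)) := by
          rw [PowerSeries.isUnit_iff_constantCoeff]
          have : ((j + 1 : ℕ) : k) ≠ 0 := Nat.cast_ne_zero.mpr (Nat.succ_ne_zero j)
          simpa using this.isUnit
        obtain ⟨u, hu⟩ := hunit
        have h4 : ((u⁻¹ : Rˣ) : R) • ((((j + 1 : ℕ) : R)) • ((X : R) ^ j • m)) = 0 := by
          rw [h1, smul_zero]
        rwa [← hu, ← mul_smul, Units.inv_mul, one_smul] at h4
  -- hence K n = ⊥ for all n
  have hbot : ∀ (n : ℕ) (m : M), (X : R) ^ n • m = 0 → m = 0 := by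
    intro n m hm
    have hmem : m ∈ K (max n N) := Kmono (le_max_left n N) hm
    have hKN : m ∈ K N := by
      rw [hN (max n N) (le_max_right n N)]; exact hmem
    have := desc N hKN
    rw [Nat.sub_self, hKmem, pow_zero, one_smul] at this
    exact this
  haveI : NoZeroSMulDivisors R M := by
    constructor
    intro f m hfm
    by_cases hf : f = 0
    · exact Or.inl hf
    · right
      have hfac := X_pow_order_mul_divXPowOrder (f := f)
      have hu := isUnit_divided_by_X_pow_order hf
      obtain ⟨u, hu⟩ := hu
      have : (X : R) ^ f.order.toNat • ((u : R) • m) = 0 := by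
        rw [← mul_smul, hu, hfac, hfm]
      have h0 := hbot _ _ this
      have : ((u⁻¹ : Rˣ) : R) • ((u : R) • m) = 0 := by rw [h0, smul_zero]
      rwa [← mul_smul, Units.inv_mul, one_smul] at this
  infer_instance
end
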